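/- Let Z be a standard normal random variable and Ψ(x) = P(Z > x). For constants m_k(u) = m(u)·(1 + β·(k·δ(u))²) with β > 0, if m(u)→∞ and m(u)·δ(u) → 0 with m(u)·δ(u)·N(u) → ∞, then Σ_{k=−N(u)}^{N(u)} Ψ(m_k(u)) / Ψ(m(u)) ∼ (1/(m(u)δ(u)))·√(π/β) as u → ∞. -/

import Mathlib

open Filter MeasureTheory ProbabilityTheory Set

/-- Standard normal survival function. -/
noncomputable def Psi (x : ℝ) : ℝ := ((gaussianReal 0 1) (Set.Ioi x)).toReal

noncomputable def phi (x : ℝ) : ℝ := (Real.sqrt (2 * Real.pi))⁻¹ * Real.exp (-x ^ 2 / 2)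

lemma phi_pos (x : ℝ) : 0 < phi x := by
  have h : 0 < Real.sqrt (2 * Real.pi) := Real.sqrt_pos.2 (by positivity)
  exact mul_pos (inv_pos.2 h) (Real.exp_pos _)

lemma phi_eq_gauss (x : ℝ) : phi x = gaussianPDFReal 0 1 x := by
  simp [phi, gaussianPDFReal]

lemma continuous_phi : Continuous phi := by
  unfold phi; fun_prop

lemma integrableOn_phi (s : Set ℝ) : IntegrableOn phi s := by
  have := integrable_gaussianPDFReal 0 1
  refine Integrable.integrableOn ?_
  exact this.congr (by filter_upwards with x using (phi_eq_gauss x).symm)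

lemma Psi_eq (x : ℝ) : Psi x = ∫ t in Set.Ioi x, phi t := by
  rw [Psi, gaussianReal_apply_eq_integral 0 one_ne_zero]
  rw [ENNReal.toReal_ofReal]
  · refine setIntegral_congr_fun measurableSet_Ioi fun t _ => (phi_eq_gauss t).symm
  · exact setIntegral_nonneg measurableSet_Ioi fun t _ => gaussianPDFReal_nonneg 0 1 t

lemma Psi_pos (x : ℝ) : 0 < Psi x := by
  rw [Psi_eq]
  refine setIntegral_pos_iff_support_of_nonneg_ae ?_ ?_ |>.2 ?_
  · filter_upwards with t using (phi_pos t).le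
  · exact integrableOn_phi _
  · have : (Function.support phi) = univ := by
      ext t; simp [Function.support, (phi_pos t).ne']
    rw [this, univ_inter]
    simp [Real.volume_Ioi]

lemma Psi_nonneg (x : ℝ) : 0 ≤ Psi x := (Psi_pos x).le

lemma hasDerivAt_neg_phi (t : ℝ) : HasDerivAt (fun s => -phi s) (t * phi t) t := by
  have h : HasDerivAt (fun s : ℝ => -s ^ 2 / 2) (-t) t := by
    have := (hasDerivAt_pow 2 t).neg.div_const 2
    simpa using this.congr_deriv (by ring)
  have := (h.exp.const_mul (Real.sqrt (2 * Real.pi))⁻¹).neg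
  refine this.congr_deriv ?_
  simp only [phi]; ring

lemma tendsto_phi_atTop : Tendsto phi atTop (nhds 0) := by
  rw [show (0:ℝ) = (Real.sqrt (2 * Real.pi))⁻¹ * 0 by ring]
  refine Tendsto.const_mul _ ?_
  refine Real.tendsto_exp_atBot.comp ?_
  have : Tendsto (fun x : ℝ => x ^ 2 / 2) atTop atTop :=
    (tendsto_pow_atTop two_ne_zero).atTop_div_const two_pos
  have h2 : Tendsto (fun x : ℝ => -x ^ 2 / 2) atTop atBot := by
    simpa [neg_div] using tendsto_neg_atBot_iff.mpr this
  exact h2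

lemma integrableOn_mul_phi (x : ℝ) (hx : 0 < x) : IntegrableOn (fun t => t * phi t) (Ioi x) := by
  refine integrableOn_Ioi_deriv_of_nonneg' (g := fun s => -phi s)
    (fun t _ => hasDerivAt_neg_phi t) (fun t ht => ?_) tendsto_phi_atTop.neg
  · exact mul_nonneg (le_of_lt (hx.trans ht)) (phi_pos t).le

lemma integral_mul_phi (x : ℝ) (hx : 0 < x) : ∫ t in Ioi x, t * phi t = phi x := by
  have := integral_Ioi_of_hasDerivAt_of_tendsto' (f := fun s => -phi s)
    (fun t _ => hasDerivAt_neg_phi t) (integrableOn_mul_phi x hx) tendsto_phi_atTop.neg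
  simpa using this

/-- Mills upper bound. -/
lemma Psi_le (x : ℝ) (hx : 0 < x) : Psi x ≤ phi x / x := by
  rw [Psi_eq, div_eq_inv_mul, ← integral_mul_phi x hx]
  rw [← integral_const_mul]
  refine setIntegral_mono_on (integrableOn_phi _) ((integrableOn_mul_phi x hx).const_mul _)
    measurableSet_Ioi fun t ht => ?_
  rw [← mul_assoc]
  nth_rewrite 1 [← one_mul (phi t)]
  refine mul_le_mul_of_nonneg_right ?_ (phi_pos t).le
  rw [le_inv_mul_iff₀ hx, mul_one]
  exact (le_of_lt ht)

lemma hasDerivAt_G (t : ℝ) (ht : 0 < t) :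
    HasDerivAt (fun s => -(phi s / s)) (phi t + phi t / t ^ 2) t := by
  have h1 : HasDerivAt (fun s : ℝ => phi s) (-(t * phi t)) t := by
    have := (hasDerivAt_neg_phi t).neg
    simpa [Pi.neg_def] using this
  have h2 := (h1.div (hasDerivAt_id t) ht.ne').neg
  refine h2.congr_deriv ?_
  simp only [id]
  field_simp
  ring

lemma integrableOn_G' (x : ℝ) (hx : 0 < x) :
    IntegrableOn (fun t => phi t + phi t / t ^ 2) (Ioi x) := by
  refine integrableOn_Ioi_deriv_of_nonneg' (g := fun s => -(phi s / s)) (l := 0)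
    (fun t ht => hasDerivAt_G t (hx.trans_le ht)) (fun t ht => ?_) ?_
  · have := phi_pos t; have h2 : (0:ℝ) < t := hx.trans ht; positivity
  · rw [show (0:ℝ) = -(0 * 0) by ring]
    exact ((tendsto_phi_atTop.mul tendsto_inv_atTop_zero).congr (fun s => by
      rw [div_eq_mul_inv])).neg

lemma integral_G' (x : ℝ) (hx : 0 < x) :
    ∫ t in Ioi x, (phi t + phi t / t ^ 2) = phi x / x := by
  have := integral_Ioi_of_hasDerivAt_of_tendsto' (f := fun s => -(phi s / s)) (m := 0)
    (fun t ht => hasDerivAt_G t (hx.trans_le ht)) (integrableOn_G' x hx) ?_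
  · simpa using this
  · rw [show (0:ℝ) = -(0 * 0) by ring]
    exact ((tendsto_phi_atTop.mul tendsto_inv_atTop_zero).congr (fun s => by
      rw [div_eq_mul_inv])).neg

/-- Mills lower bound. -/
lemma Psi_ge (x : ℝ) (hx : 0 < x) : x * phi x / (x ^ 2 + 1) ≤ Psi x := by
  have hint2 : IntegrableOn (fun t => phi t / t ^ 2) (Ioi x) := by
    have := (integrableOn_G' x hx).sub (integrableOn_phi (Ioi x))
    refine this.congr (ae_of_all _ fun t => ?_)
    simp [Pi.sub_apply]
  have key : Psi x + ∫ t in Ioi x, phi t / t ^ 2 = phi x / x := by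
    rw [Psi_eq, ← integral_add (integrableOn_phi _) hint2, integral_G' x hx]
  have bound : ∫ t in Ioi x, phi t / t ^ 2 ≤ Psi x / x ^ 2 := by
    rw [Psi_eq, div_eq_mul_inv, ← integral_mul_const]
    refine setIntegral_mono_on hint2 ((integrableOn_phi _).mul_const _)
      measurableSet_Ioi fun t ht => ?_
    rw [div_eq_mul_inv]
    refine mul_le_mul_of_nonneg_left ?_ (phi_pos t).le
    have h1 : (0:ℝ) < x ^ 2 := by positivity
    have h2 : x ^ 2 ≤ t ^ 2 := by nlinarith [le_of_lt ht.out]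
    exact inv_anti₀ h1 h2
  have h3 : phi x / x ≤ Psi x + Psi x / x ^ 2 := by linarith
  rw [div_le_iff₀ hx] at h3
  rw [div_le_iff₀ (by positivity : (0:ℝ) < x ^ 2 + 1)]
  have hx2 : (0:ℝ) < x ^ 2 := by positivity
  nlinarith [Psi_nonneg x, hx2, div_mul_cancel₀ (Psi x) hx2.ne']

lemma tendsto_sqrt_atTop' : Tendsto Real.sqrt atTop atTop := by
  refine tendsto_atTop.2 fun b => ?_
  filter_upwards [eventually_ge_atTop ((max b 0) ^ 2)] with x hx
  have h0 : 0 ≤ max b 0 := le_max_right _ _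
  calc b ≤ max b 0 := le_max_left b 0
    _ = Real.sqrt ((max b 0) ^ 2) := (Real.sqrt_sq h0).symm
    _ ≤ Real.sqrt x := Real.sqrt_le_sqrt hx

/-- Per-term upper bound via Mills ratio. -/
lemma term_upper (M a : ℝ) (hM : 0 < M) (ha : 0 ≤ a) :
    Psi (M * (1 + a)) ≤ (1 + 1 / M ^ 2) * Real.exp (-(M ^ 2 * a)) * Psi M := by
  have hMa : 0 < M * (1 + a) := by nlinarith
  have hphi := phi_pos M
  have hPsiM := Psi_nonneg M
  have hsplit : phi (M * (1 + a)) =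
      phi M * Real.exp (-(M ^ 2 * a)) * Real.exp (-(M ^ 2 * a ^ 2 / 2)) := by
    simp only [phi, mul_assoc, ← Real.exp_add]
    congr 1
    ring
  have h1 : Psi (M * (1 + a)) ≤ phi (M * (1 + a)) / M := by
    refine (Psi_le _ hMa).trans ?_
    exact div_le_div_of_nonneg_left (phi_pos _).le hM (by nlinarith)
  have h2 : phi (M * (1 + a)) ≤ phi M * Real.exp (-(M ^ 2 * a)) := by
    rw [hsplit]
    nth_rewrite 2 [← mul_one (phi M * Real.exp (-(M ^ 2 * a)))]
    refine mul_le_mul_of_nonneg_left ?_ (by positivity)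
    exact Real.exp_le_one_iff.2 (by nlinarith)
  have h3 : phi M / M ≤ (1 + 1 / M ^ 2) * Psi M := by
    have hge := Psi_ge M hM
    have key : (1 + 1 / M ^ 2) * (M * phi M / (M ^ 2 + 1)) * M = phi M := by
      field_simp
    rw [div_le_iff₀ hM]
    calc phi M = (1 + 1 / M ^ 2) * (M * phi M / (M ^ 2 + 1)) * M := key.symm
      _ ≤ (1 + 1 / M ^ 2) * Psi M * M :=
        mul_le_mul_of_nonneg_right (mul_le_mul_of_nonneg_left hge (by positivity)) hM.le
  calc Psi (M * (1 + a)) ≤ phi (M * (1 + a)) / M := h1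
    _ ≤ phi M * Real.exp (-(M ^ 2 * a)) / M := by
        gcongr
    _ = (phi M / M) * Real.exp (-(M ^ 2 * a)) := by ring
    _ ≤ (1 + 1 / M ^ 2) * Psi M * Real.exp (-(M ^ 2 * a)) := by
        exact mul_le_mul_of_nonneg_right h3 (Real.exp_pos _).le
    _ = (1 + 1 / M ^ 2) * Real.exp (-(M ^ 2 * a)) * Psi M := by ring

/-- Per-term lower bound via Mills ratio. -/
lemma term_lower (M a A : ℝ) (hM : 0 < M) (ha : 0 ≤ a) (haA : a ≤ A) :
    Real.exp (-(M ^ 2 * a)) * (Real.exp (-((M * A) ^ 2 / 2)) * ((1 + A) ^ 2 + 1 / M ^ 2)⁻¹)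
      * Psi M ≤ Psi (M * (1 + a)) := by
  have hMa : 0 < M * (1 + a) := by nlinarith
  have hphi := phi_pos M
  have hA : 0 ≤ A := ha.trans haA
  have hsplit : phi (M * (1 + a)) =
      phi M * Real.exp (-(M ^ 2 * a)) * Real.exp (-(M ^ 2 * a ^ 2 / 2)) := by
    simp only [phi, mul_assoc, ← Real.exp_add]
    congr 1
    ring
  have h1 : M * (1 + a) * phi (M * (1 + a)) / ((M * (1 + a)) ^ 2 + 1) ≤ Psi (M * (1 + a)) :=
    Psi_ge _ hMa
  have hMPsi : M * Psi M ≤ phi M := by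
    have := Psi_le M hM
    rw [le_div_iff₀ hM] at this
    linarith [this]
  have hden : (0:ℝ) < (M * (1 + a)) ^ 2 + 1 := by positivity
  have hden2 : (0:ℝ) < (1 + A) ^ 2 + 1 / M ^ 2 := by positivity
  refine le_trans ?_ h1
  have hfrac : ((1 + A) ^ 2 + 1 / M ^ 2)⁻¹ ≤ M ^ 2 / ((M * (1 + a)) ^ 2 + 1) := by
    have e : M ^ 2 / ((M * (1 + a)) ^ 2 + 1) = ((1 + a) ^ 2 + 1 / M ^ 2)⁻¹ := by
      rw [inv_eq_one_div, div_eq_div_iff hden.ne' (by positivity : ((1+a)^2+1/M^2) ≠ 0)]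
      field_simp
    rw [e]
    refine inv_anti₀ (by positivity) ?_
    have : (1 + a) ^ 2 ≤ (1 + A) ^ 2 := by nlinarith
    linarith
  have hE2 : Real.exp (-((M * A) ^ 2 / 2)) ≤ Real.exp (-(M ^ 2 * a ^ 2 / 2)) := by
    refine Real.exp_le_exp.2 ?_
    have h : a ^ 2 ≤ A ^ 2 := by nlinarith
    nlinarith [mul_le_mul_of_nonneg_left h (sq_nonneg M)]
  have hPsile : Psi M ≤ phi M / M := Psi_le M hM
  calc Real.exp (-(M ^ 2 * a)) * (Real.exp (-((M * A) ^ 2 / 2)) * ((1 + A) ^ 2 + 1 / M ^ 2)⁻¹)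
        * Psi M
      ≤ Real.exp (-(M ^ 2 * a)) * (Real.exp (-(M ^ 2 * a ^ 2 / 2))
        * (M ^ 2 / ((M * (1 + a)) ^ 2 + 1))) * (phi M / M) := by
        have h0 : (0:ℝ) ≤ ((1 + A) ^ 2 + 1 / M ^ 2)⁻¹ := by positivity
        refine mul_le_mul (mul_le_mul_of_nonneg_left
          (mul_le_mul hE2 hfrac h0 (Real.exp_pos _).le) (Real.exp_pos _).le)
          hPsile (Psi_nonneg M) (by positivity)
    _ = M * phi (M * (1 + a)) / ((M * (1 + a)) ^ 2 + 1) := by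
        rw [hsplit]
        field_simp
    _ ≤ M * (1 + a) * phi (M * (1 + a)) / ((M * (1 + a)) ^ 2 + 1) := by
        gcongr
        · exact (phi_pos _).le
        · nlinarith

lemma sum_Icc_neg_eq (g : ℤ → ℝ) (hg : ∀ k, g (-k) = g k) (n : ℕ) :
    ∑ k ∈ Finset.Icc (-(n : ℤ)) (n : ℤ), g k
      = 2 * (∑ i ∈ Finset.range (n + 1), g i) - g 0 := by
  induction n with
  | zero => simp; ring
  | succ n ih =>
    have h1 : Finset.Icc (-((n:ℤ) + 1)) ((n:ℤ) + 1)
        = insert (-((n:ℤ) + 1)) (insert ((n:ℤ) + 1) (Finset.Icc (-(n:ℤ)) (n:ℤ))) := by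
      ext k
      simp only [Finset.mem_Icc, Finset.mem_insert]
      omega
    have hmem1 : ((n:ℤ) + 1) ∉ Finset.Icc (-(n:ℤ)) (n:ℤ) := by
      simp only [Finset.mem_Icc]; omega
    have hmem2 : (-((n:ℤ) + 1)) ∉ insert ((n:ℤ) + 1) (Finset.Icc (-(n:ℤ)) (n:ℤ)) := by
      simp only [Finset.mem_insert, Finset.mem_Icc]; omega
    push_cast
    rw [h1, Finset.sum_insert hmem2, Finset.sum_insert hmem1, ih]
    conv_rhs => rw [Finset.sum_range_succ]
    have := hg ((n:ℤ) + 1)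
    push_cast
    linarith

lemma antitoneOn_gauss (B : ℝ) (hB : 0 < B) (s : Set ℝ) (hs : s ⊆ Ici 0) :
    AntitoneOn (fun t => Real.exp (-(B * t ^ 2))) s := by
  intro x hx y hy hxy
  have hx0 : (0:ℝ) ≤ x := hs hx
  have hy0 : (0:ℝ) ≤ y := hs hy
  refine Real.exp_le_exp.2 ?_
  have h : x ^ 2 ≤ y ^ 2 := by nlinarith
  nlinarith

lemma integrable_gauss' (B : ℝ) (hB : 0 < B) :
    Integrable (fun t : ℝ => Real.exp (-(B * t ^ 2))) := by
  have := integrable_exp_neg_mul_sq hB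
  exact this.congr (by filter_upwards with t using by rw [neg_mul])

lemma integral_Ioi_gauss (B : ℝ) (hB : 0 < B) :
    ∫ t in Ioi (0:ℝ), Real.exp (-(B * t ^ 2)) = Real.sqrt (Real.pi / B) / 2 := by
  rw [← integral_gaussian_Ioi B]
  refine setIntegral_congr_fun measurableSet_Ioi fun t _ => by rw [neg_mul]

/-- Upper bound: sum over `range (n+1)` at integer points is at most `1 + ∫_{Ioi 0}`. -/
lemma sum_gauss_le (B : ℝ) (hB : 0 < B) (n : ℕ) :
    ∑ i ∈ Finset.range (n + 1), Real.exp (-(B * (i : ℝ) ^ 2))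
      ≤ 1 + Real.sqrt (Real.pi / B) / 2 := by
  rw [Finset.sum_range_succ']
  have hanti : AntitoneOn (fun t => Real.exp (-(B * t ^ 2))) (Icc (0:ℝ) (0 + n)) :=
    antitoneOn_gauss B hB _ (fun x hx => by
      simp only [mem_Icc] at hx; exact hx.1)
  have h1 := hanti.sum_le_integral
  have h2 : (∫ t in (0:ℝ)..(0 + (n:ℝ)), Real.exp (-(B * t ^ 2)))
      ≤ Real.sqrt (Real.pi / B) / 2 := by
    rw [← integral_Ioi_gauss B hB, zero_add,
      intervalIntegral.integral_of_le (by positivity)]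
    refine setIntegral_mono_set ((integrable_gauss' B hB).integrableOn) ?_ ?_
    · filter_upwards with t using (Real.exp_pos _).le
    · filter_upwards with t using fun ht => ht.1
  have e1 : ∀ i : ℕ, Real.exp (-(B * ((i + 1 : ℕ) : ℝ) ^ 2))
      = (fun t => Real.exp (-(B * t ^ 2))) ((0:ℝ) + ((i + 1 : ℕ) : ℝ)) := fun i => by norm_num
  rw [Finset.sum_congr rfl fun i _ => e1 i]
  have e0 : Real.exp (-(B * ((0 : ℕ) : ℝ) ^ 2)) = 1 := by norm_num
  rw [e0]
  linarith [h1.trans h2]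

/-- Lower bound: sum over `range (n+1)` at integer points is at least `∫_0^n`. -/
lemma sum_gauss_ge (B : ℝ) (hB : 0 < B) (n : ℕ) :
    (∫ t in (0:ℝ)..(n:ℝ), Real.exp (-(B * t ^ 2)))
      ≤ ∑ i ∈ Finset.range (n + 1), Real.exp (-(B * (i : ℝ) ^ 2)) := by
  have hanti : AntitoneOn (fun t => Real.exp (-(B * t ^ 2))) (Icc (0:ℝ) (0 + n)) :=
    antitoneOn_gauss B hB _ (fun x hx => by
      simp only [mem_Icc] at hx; exact hx.1)
  have h1 := hanti.integral_le_sum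
  rw [zero_add] at h1
  have e1 : ∀ i : ℕ, (fun t => Real.exp (-(B * t ^ 2))) ((0:ℝ) + (i:ℝ))
      = Real.exp (-(B * (i:ℝ) ^ 2)) := fun i => by norm_num
  rw [Finset.sum_range_succ]
  refine le_trans (h1.trans (le_of_eq (Finset.sum_congr rfl fun i _ => e1 i))) ?_
  exact le_add_of_nonneg_right (Real.exp_pos _).le

lemma integral_gauss_sub (b c : ℝ) (hc : 0 < c) (n : ℕ) :
    ∫ t in (0:ℝ)..(n:ℝ), Real.exp (-(b * c ^ 2 * t ^ 2))
      = c⁻¹ * ∫ x in (0:ℝ)..(c * n), Real.exp (-(b * x ^ 2)) := by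
  have h := intervalIntegral.integral_comp_mul_left (a := (0:ℝ)) (b := (n:ℝ))
    (f := fun x => Real.exp (-(b * x ^ 2))) (c := c) hc.ne'
  rw [mul_zero, smul_eq_mul] at h
  rw [← h]
  refine intervalIntegral.integral_congr fun t _ => ?_
  congr 1
  ring

set_option maxHeartbeats 2000000 in
theorem sum_normal_tails_asymptotics
    (β : ℝ) (hβ : 0 < β) (m δ : ℕ → ℝ) (N : ℕ → ℕ)
    (hδ : ∀ u, 0 < δ u)
    (hm : Tendsto m atTop atTop)
    (hmδ : Tendsto (fun u => m u * δ u) atTop (nhds 0))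
    (hmδN : Tendsto (fun u => m u * δ u * (N u : ℝ)) atTop atTop) :
    Tendsto (fun u =>
        (∑ k ∈ Finset.Icc (-(N u : ℤ)) (N u : ℤ),
            Psi (m u * (1 + β * ((k : ℝ) * δ u) ^ 2))) / Psi (m u)
          / ((m u * δ u)⁻¹ * Real.sqrt (Real.pi / β)))
      atTop (nhds 1) := by
  set Q : ℝ := Real.sqrt (Real.pi / β) with hQ
  have hQpos : 0 < Q := Real.sqrt_pos.2 (by positivity)
  set c : ℕ → ℝ := fun u => m u * δ u with hcdef
  set s : ℕ → ℝ := fun u => Real.sqrt (Real.sqrt (m u)) with hsdef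
  set K : ℕ → ℕ := fun u => min (N u) (Nat.ceil (s u / c u)) with hKdef
  have hs_top : Tendsto s atTop atTop :=
    tendsto_sqrt_atTop'.comp (tendsto_sqrt_atTop'.comp hm)
  have hsqm_top : Tendsto (fun u => Real.sqrt (m u)) atTop atTop :=
    tendsto_sqrt_atTop'.comp hm
  -- basic eventual facts
  have hEv : ∀ᶠ u in atTop, 1 ≤ m u ∧ 0 < c u ∧ c u < 1 ∧ 1 ≤ s u ∧ 1 ≤ Real.sqrt (m u) := by
    filter_upwards [hm.eventually (eventually_ge_atTop 1),
      hmδ.eventually (eventually_lt_nhds (by norm_num : (0:ℝ) < 1)),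
      hs_top.eventually (eventually_ge_atTop 1),
      hsqm_top.eventually (eventually_ge_atTop 1)] with u h1 h2 h3 h4
    exact ⟨h1, mul_pos (lt_of_lt_of_le one_pos h1) (hδ u), h2, h3, h4⟩
  -- c * K → ∞
  have hcK_top : Tendsto (fun u => c u * (K u : ℝ)) atTop atTop := by
    rw [tendsto_atTop]
    intro b
    filter_upwards [hmδN.eventually (eventually_ge_atTop b),
      hs_top.eventually (eventually_ge_atTop b), hEv] with u h1 h2 ⟨hm1, hc0, _, _, _⟩
    have harg : 0 ≤ s u / c u := by positivity
    rcases min_cases (N u) (Nat.ceil (s u / c u)) with ⟨hEq, _⟩ | ⟨hEq, _⟩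
    · rw [hKdef]
      simp only [hEq]
      exact h1
    · rw [hKdef]
      simp only [hEq]
      have h3 : s u / c u ≤ (Nat.ceil (s u / c u) : ℝ) := Nat.le_ceil _
      have h4 : s u ≤ c u * (Nat.ceil (s u / c u) : ℝ) := by
        rw [div_le_iff₀ hc0] at h3
        linarith [h3]
      linarith
  -- c * K ≤ s + c eventually
  have hcK_le : ∀ᶠ u in atTop, c u * (K u : ℝ) ≤ s u + c u := by
    filter_upwards [hEv] with u ⟨hm1, hc0, _, hs1, _⟩
    have harg : 0 ≤ s u / c u := by positivity
    have h1 : (K u : ℝ) ≤ (Nat.ceil (s u / c u) : ℝ) := by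
      exact_mod_cast Nat.cast_le.2 (min_le_right _ _)
    have h2 : (Nat.ceil (s u / c u) : ℝ) < s u / c u + 1 := Nat.ceil_lt_add_one harg
    have h3 : c u * (K u : ℝ) ≤ c u * (s u / c u + 1) := by
      refine mul_le_mul_of_nonneg_left (h1.trans h2.le) hc0.le
    calc c u * (K u : ℝ) ≤ c u * (s u / c u + 1) := h3
      _ = s u + c u := by field_simp
  -- (K : ℝ) * δ = (c * K) / m
  have hKδ : ∀ᶠ u in atTop, (K u : ℝ) * δ u = c u * (K u : ℝ) / m u := by
    filter_upwards [hEv] with u ⟨h1, _, _, _, _⟩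
    have hm0 : m u ≠ 0 := by linarith
    field_simp [hcdef]
    ring
  -- t1 = K δ → 0
  have hbnd : ∀ᶠ u in atTop, c u * (K u : ℝ) ≤ 2 * s u := by
    filter_upwards [hcK_le, hEv] with u h1 ⟨_, _, hc1, hs1, _⟩
    linarith
  have hub : Tendsto (fun u => 2 / Real.sqrt (m u)) atTop (nhds 0) := by
    have := hsqm_top.inv_tendsto_atTop
    have h2 := this.const_mul (2:ℝ)
    simpa [div_eq_mul_inv] using h2
  have hub4 : Tendsto (fun u => 4 / Real.sqrt (m u)) atTop (nhds 0) := by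
    have := hsqm_top.inv_tendsto_atTop
    have h2 := this.const_mul (4:ℝ)
    simpa [div_eq_mul_inv] using h2
  have h_t1 : Tendsto (fun u => (K u : ℝ) * δ u) atTop (nhds 0) := by
    refine tendsto_of_tendsto_of_tendsto_of_le_of_le' tendsto_const_nhds hub ?_ ?_
    · filter_upwards with u
      exact mul_nonneg (Nat.cast_nonneg _) (hδ u).le
    · filter_upwards [hKδ, hbnd, hEv] with u h1 h2 ⟨hm1, hc0, _, hs1, hq1⟩
      rw [h1]
      have hm0 : (0:ℝ) < m u := by linarith
      rw [div_le_div_iff₀ hm0 (by linarith : (0:ℝ) < Real.sqrt (m u))]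
      have hss : s u * Real.sqrt (m u) ≤ m u := by
        have hsm : Real.sqrt (m u) ≤ m u := by
          have h5 : Real.sqrt (m u) ≤ Real.sqrt ((m u) ^ 2) := Real.sqrt_le_sqrt (by nlinarith)
          rwa [Real.sqrt_sq (by linarith)] at h5
        have h4 : s u ≤ Real.sqrt (m u) := Real.sqrt_le_sqrt hsm
        calc s u * Real.sqrt (m u) ≤ Real.sqrt (m u) * Real.sqrt (m u) := by nlinarith
          _ = m u := Real.mul_self_sqrt (by linarith)
      calc c u * (K u : ℝ) * Real.sqrt (m u) ≤ 2 * s u * Real.sqrt (m u) := by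
            refine mul_le_mul_of_nonneg_right h2 (by linarith)
        _ ≤ 2 * m u := by nlinarith
  -- t2 = m (Kδ)² → 0
  have h_t2 : Tendsto (fun u => m u * ((K u : ℝ) * δ u) ^ 2) atTop (nhds 0) := by
    refine tendsto_of_tendsto_of_tendsto_of_le_of_le' tendsto_const_nhds hub4 ?_ ?_
    · filter_upwards [hEv] with u ⟨hm1, _, _, _, _⟩
      have : (0:ℝ) < m u := by linarith
      positivity
    · filter_upwards [hKδ, hbnd, hEv] with u h1 h2 ⟨hm1, hc0, _, hs1, hq1⟩
      rw [h1]
      have hm0 : (0:ℝ) < m u := by linarith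
      have hcK0 : 0 ≤ c u * (K u : ℝ) := by positivity
      have e1 : m u * (c u * (K u : ℝ) / m u) ^ 2 = (c u * (K u : ℝ)) ^ 2 / m u := by
        field_simp
      rw [e1, div_le_div_iff₀ hm0 (by linarith : (0:ℝ) < Real.sqrt (m u))]
      have hsq : s u ^ 2 = Real.sqrt (m u) := Real.sq_sqrt (Real.sqrt_nonneg _)
      have h3 : (c u * (K u : ℝ)) ^ 2 ≤ 4 * s u ^ 2 := by nlinarith
      calc (c u * (K u : ℝ)) ^ 2 * Real.sqrt (m u) ≤ 4 * s u ^ 2 * Real.sqrt (m u) := by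
            refine mul_le_mul_of_nonneg_right h3 (Real.sqrt_nonneg _)
        _ = 4 * (Real.sqrt (m u) * Real.sqrt (m u)) := by rw [hsq]; ring
        _ = 4 * m u := by rw [Real.mul_self_sqrt (by linarith)]
  -- partial gaussian integral
  set I : ℕ → ℝ := fun u => ∫ x in (0:ℝ)..(c u * (K u : ℝ)), Real.exp (-(β * x ^ 2))
    with hIdef
  have hI : Tendsto I atTop (nhds (Q / 2)) := by
    have := intervalIntegral_tendsto_integral_Ioi (μ := volume) 0
      ((integrable_gauss' β hβ).integrableOn) hcK_top
    rwa [integral_Ioi_gauss β hβ] at this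
  -- upper and lower comparison functions
  set U : ℕ → ℝ := fun u => (1 + 1 / (m u) ^ 2) * (c u / Q + 1) with hUdef
  set A : ℕ → ℝ := fun u => β * ((K u : ℝ) * δ u) ^ 2 with hAdef
  set E : ℕ → ℝ := fun u =>
    Real.exp (-((m u * A u) ^ 2 / 2)) * ((1 + A u) ^ 2 + 1 / (m u) ^ 2)⁻¹ with hEdef
  set L : ℕ → ℝ := fun u => E u * (2 * I u / Q - c u / Q) with hLdef
  have hmsq_inv : Tendsto (fun u => 1 / (m u) ^ 2) atTop (nhds 0) := by
    have h1 : Tendsto (fun u => (m u) ^ 2) atTop atTop :=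
      (tendsto_pow_atTop two_ne_zero).comp hm
    simpa [one_div, Pi.inv_def] using h1.inv_tendsto_atTop
  have hU1 : Tendsto U atTop (nhds 1) := by
    have h1 : Tendsto (fun u => 1 + 1 / (m u) ^ 2) atTop (nhds 1) := by
      simpa using tendsto_const_nhds.add hmsq_inv
    have h2 : Tendsto (fun u => c u / Q + 1) atTop (nhds 1) := by
      have := (hmδ.div_const Q).add (tendsto_const_nhds (x := (1:ℝ)))
      simpa using this
    have := h1.mul h2
    rw [one_mul] at this
    exact this
  have hA0 : Tendsto A atTop (nhds 0) := by
    have := (h_t1.mul h_t1).const_mul β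
    simpa [hAdef, pow_two, mul_assoc] using this
  have hL1 : Tendsto L atTop (nhds 1) := by
    have hmA : Tendsto (fun u => m u * A u) atTop (nhds 0) := by
      have h := h_t2.const_mul β
      rw [mul_zero] at h
      refine h.congr fun u => ?_
      simp only [hAdef]
      ring
    have hexp : Tendsto (fun u => Real.exp (-((m u * A u) ^ 2 / 2))) atTop (nhds 1) := by
      have h1 : Tendsto (fun u => -((m u * A u) ^ 2 / 2)) atTop (nhds 0) := by
        have := ((hmA.mul hmA).div_const 2).neg
        simpa [pow_two] using this
      have := (Real.continuous_exp.tendsto 0).comp h1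
      simpa [Function.comp_def] using this
    have hinv : Tendsto (fun u => ((1 + A u) ^ 2 + 1 / (m u) ^ 2)⁻¹) atTop (nhds 1) := by
      have h1 : Tendsto (fun u => (1 + A u) ^ 2 + 1 / (m u) ^ 2) atTop (nhds 1) := by
        have h2 : Tendsto (fun u => (1 + A u) ^ 2) atTop (nhds 1) := by
          have h3 : Tendsto (fun u => 1 + A u) atTop (nhds 1) := by
            simpa using tendsto_const_nhds.add hA0
          have := h3.mul h3
          rw [one_mul] at this
          exact this.congr fun u => (pow_two (1 + A u)).symm
        simpa using h2.add hmsq_inv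
      have := h1.inv₀ (by norm_num)
      simpa using this
    have hE1 : Tendsto E atTop (nhds 1) := by
      have := hexp.mul hinv
      rw [one_mul] at this
      exact this
    have hsecond : Tendsto (fun u => 2 * I u / Q - c u / Q) atTop (nhds 1) := by
      have h1 : Tendsto (fun u => 2 * I u / Q) atTop (nhds 1) := by
        have := ((hI.const_mul 2).div_const Q)
        have e : 2 * (Q / 2) / Q = 1 := by field_simp
        rwa [e] at this
      have h2 := hmδ.div_const Q
      have := h1.sub h2
      simpa using this
    simpa using hE1.mul hsecond
  -- the squeeze
  have halg : ∀ e i cc : ℝ, cc ≠ 0 → (e * (2 * i / Q - cc / Q)) * (cc⁻¹ * Q)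
      = e * (2 * cc⁻¹ * i - 1) := by
    intro e i cc hcc
    field_simp
  have halg2 : ∀ x cc : ℝ, cc ≠ 0 → (1 + x) * (1 + Q / cc)
      = ((1 + x) * (cc / Q + 1)) * (cc⁻¹ * Q) := by
    intro x cc hcc
    field_simp
  refine tendsto_of_tendsto_of_tendsto_of_le_of_le' hL1 hU1 ?_ ?_
  · -- lower bound
    filter_upwards [hEv] with u ⟨hm1, hc0, hc1, hs1, hq1⟩
    have hm0 : (0:ℝ) < m u := by linarith
    have hPsi0 : 0 < Psi (m u) := Psi_pos _
    have hB0 : 0 < β * c u ^ 2 := by positivity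
    have hd0 : 0 < (c u)⁻¹ * Q := by positivity
    have hE0 : 0 ≤ E u := by
      simp only [hEdef]
      positivity
    have hsym : ∀ k : ℤ, Real.exp (-(β * c u ^ 2 * (((-k : ℤ)):ℝ) ^ 2))
        = Real.exp (-(β * c u ^ 2 * ((k:ℝ)) ^ 2)) := fun k => by
      push_cast
      ring_nf
    have hKsub : Finset.Icc (-(K u : ℤ)) (K u : ℤ) ⊆ Finset.Icc (-(N u : ℤ)) (N u : ℤ) := by
      refine Finset.Icc_subset_Icc ?_ ?_
      · exact neg_le_neg (by exact_mod_cast min_le_left _ _)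
      · exact_mod_cast min_le_left (N u) _
    have hsub : (∑ k ∈ Finset.Icc (-(K u : ℤ)) (K u : ℤ),
          Psi (m u * (1 + β * ((k : ℝ) * δ u) ^ 2)))
        ≤ ∑ k ∈ Finset.Icc (-(N u : ℤ)) (N u : ℤ),
          Psi (m u * (1 + β * ((k : ℝ) * δ u) ^ 2)) :=
      Finset.sum_le_sum_of_subset_of_nonneg hKsub (fun k _ _ => Psi_nonneg _)
    have hstep1 : E u * Psi (m u) * (∑ k ∈ Finset.Icc (-(K u : ℤ)) (K u : ℤ),
          Real.exp (-(β * c u ^ 2 * ((k:ℝ)) ^ 2)))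
        ≤ ∑ k ∈ Finset.Icc (-(K u : ℤ)) (K u : ℤ),
          Psi (m u * (1 + β * ((k : ℝ) * δ u) ^ 2)) := by
      rw [Finset.mul_sum]
      refine Finset.sum_le_sum fun k hk => ?_
      have hkb := Finset.mem_Icc.1 hk
      have hk2 : (k:ℝ) ^ 2 ≤ ((K u : ℕ) : ℝ) ^ 2 := by
        have h1 : k ^ 2 ≤ (K u : ℤ) ^ 2 := by nlinarith [hkb.1, hkb.2]
        exact_mod_cast h1
      have haA : β * ((k:ℝ) * δ u) ^ 2 ≤ A u := by
        calc β * ((k:ℝ) * δ u) ^ 2 = β * ((k:ℝ) ^ 2 * (δ u) ^ 2) := by ring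
          _ ≤ β * (((K u : ℕ) : ℝ) ^ 2 * (δ u) ^ 2) :=
            mul_le_mul_of_nonneg_left
              (mul_le_mul_of_nonneg_right hk2 (sq_nonneg _)) hβ.le
          _ = A u := by simp only [hAdef]; ring
      have ht := term_lower (m u) (β * ((k:ℝ) * δ u) ^ 2) (A u) hm0 (by positivity) haA
      refine le_trans (le_of_eq ?_) ht
      have e : Real.exp (-(β * c u ^ 2 * ((k:ℝ)) ^ 2))
          = Real.exp (-((m u) ^ 2 * (β * ((k:ℝ) * δ u) ^ 2))) := by
        congr 1
        simp only [hcdef]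
        ring
      simp only [hEdef]
      rw [e]
      ring
    have hstep2 : 2 * (c u)⁻¹ * I u - 1
        ≤ ∑ k ∈ Finset.Icc (-(K u : ℤ)) (K u : ℤ),
          Real.exp (-(β * c u ^ 2 * ((k:ℝ)) ^ 2)) := by
      rw [sum_Icc_neg_eq _ hsym (K u)]
      have hcast : (∑ i ∈ Finset.range (K u + 1),
            Real.exp (-(β * c u ^ 2 * (((i:ℤ)):ℝ) ^ 2)))
          = ∑ i ∈ Finset.range (K u + 1),
            Real.exp (-(β * c u ^ 2 * ((i:ℕ):ℝ) ^ 2)) :=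
        Finset.sum_congr rfl fun i _ => by push_cast; ring_nf
      rw [hcast]
      have h1 := sum_gauss_ge (β * c u ^ 2) hB0 (K u)
      have h2 := integral_gauss_sub β (c u) hc0 (K u)
      have hg0 : Real.exp (-(β * c u ^ 2 * (((0:ℤ)):ℝ) ^ 2)) = 1 := by norm_num
      rw [hg0]
      rw [h2] at h1
      simp only [hIdef]
      linarith
    have hstep3 : E u * (2 * (c u)⁻¹ * I u - 1) * Psi (m u)
        ≤ ∑ k ∈ Finset.Icc (-(N u : ℤ)) (N u : ℤ),
          Psi (m u * (1 + β * ((k : ℝ) * δ u) ^ 2)) := by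
      have h3 : E u * (2 * (c u)⁻¹ * I u - 1)
          ≤ E u * (∑ k ∈ Finset.Icc (-(K u : ℤ)) (K u : ℤ),
            Real.exp (-(β * c u ^ 2 * ((k:ℝ)) ^ 2))) :=
        mul_le_mul_of_nonneg_left hstep2 hE0
      have h4 := mul_le_mul_of_nonneg_right h3 (Psi_nonneg (m u))
      calc E u * (2 * (c u)⁻¹ * I u - 1) * Psi (m u)
          ≤ E u * (∑ k ∈ Finset.Icc (-(K u : ℤ)) (K u : ℤ),
              Real.exp (-(β * c u ^ 2 * ((k:ℝ)) ^ 2))) * Psi (m u) := h4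
        _ = E u * Psi (m u) * (∑ k ∈ Finset.Icc (-(K u : ℤ)) (K u : ℤ),
              Real.exp (-(β * c u ^ 2 * ((k:ℝ)) ^ 2))) := by ring
        _ ≤ _ := hstep1.trans hsub
    have hid : L u * ((c u)⁻¹ * Q) = E u * (2 * (c u)⁻¹ * I u - 1) := by
      have : L u = E u * (2 * I u / Q - c u / Q) := by simp only [hLdef]
      rw [this, halg (E u) (I u) (c u) hc0.ne']
    rw [le_div_iff₀ hd0, hid, le_div_iff₀ hPsi0]
    exact hstep3
  · -- upper bound
    filter_upwards [hEv] with u ⟨hm1, hc0, hc1, hs1, hq1⟩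
    have hm0 : (0:ℝ) < m u := by linarith
    have hPsi0 : 0 < Psi (m u) := Psi_pos _
    have hB0 : 0 < β * c u ^ 2 := by positivity
    have hd0 : 0 < (c u)⁻¹ * Q := by positivity
    have hsym : ∀ k : ℤ, Real.exp (-(β * c u ^ 2 * (((-k : ℤ)):ℝ) ^ 2))
        = Real.exp (-(β * c u ^ 2 * ((k:ℝ)) ^ 2)) := fun k => by
      push_cast
      ring_nf
    have hstep1 : (∑ k ∈ Finset.Icc (-(N u : ℤ)) (N u : ℤ),
          Psi (m u * (1 + β * ((k : ℝ) * δ u) ^ 2)))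
        ≤ (1 + 1 / (m u) ^ 2) * Psi (m u) * ∑ k ∈ Finset.Icc (-(N u : ℤ)) (N u : ℤ),
          Real.exp (-(β * c u ^ 2 * ((k:ℝ)) ^ 2)) := by
      rw [Finset.mul_sum]
      refine Finset.sum_le_sum fun k _ => ?_
      have ha : 0 ≤ β * ((k:ℝ) * δ u) ^ 2 := by positivity
      have ht := term_upper (m u) _ hm0 ha
      refine ht.trans (le_of_eq ?_)
      have e : Real.exp (-((m u) ^ 2 * (β * ((k:ℝ) * δ u) ^ 2)))
          = Real.exp (-(β * c u ^ 2 * ((k:ℝ)) ^ 2)) := by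
        congr 1
        simp only [hcdef]
        ring
      rw [e]
      ring
    have hstep2 : (∑ k ∈ Finset.Icc (-(N u : ℤ)) (N u : ℤ),
          Real.exp (-(β * c u ^ 2 * ((k:ℝ)) ^ 2))) ≤ 1 + Q / c u := by
      rw [sum_Icc_neg_eq _ hsym (N u)]
      have hcast : (∑ i ∈ Finset.range (N u + 1),
            Real.exp (-(β * c u ^ 2 * (((i:ℤ)):ℝ) ^ 2)))
          = ∑ i ∈ Finset.range (N u + 1),
            Real.exp (-(β * c u ^ 2 * ((i:ℕ):ℝ) ^ 2)) :=
        Finset.sum_congr rfl fun i _ => by push_cast; ring_nf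
      rw [hcast]
      have h1 := sum_gauss_le (β * c u ^ 2) hB0 (N u)
      have hQe : Real.sqrt (Real.pi / (β * c u ^ 2)) = Q / c u := by
        rw [hQ, show Real.pi / (β * c u ^ 2) = (Real.pi / β) / c u ^ 2 by rw [div_div],
          Real.sqrt_div (by positivity), Real.sqrt_sq hc0.le]
      rw [hQe] at h1
      have hg0 : Real.exp (-(β * c u ^ 2 * (((0:ℤ)):ℝ) ^ 2)) = 1 := by norm_num
      rw [hg0]
      linarith
    have hSP : (∑ k ∈ Finset.Icc (-(N u : ℤ)) (N u : ℤ),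
          Psi (m u * (1 + β * ((k : ℝ) * δ u) ^ 2))) / Psi (m u)
        ≤ (1 + 1 / (m u) ^ 2) * (1 + Q / c u) := by
      rw [div_le_iff₀ hPsi0]
      refine hstep1.trans ?_
      have h2 : (0:ℝ) ≤ (1 + 1 / (m u) ^ 2) * Psi (m u) := by positivity
      calc (1 + 1 / (m u) ^ 2) * Psi (m u) * ∑ k ∈ Finset.Icc (-(N u : ℤ)) (N u : ℤ),
            Real.exp (-(β * c u ^ 2 * ((k:ℝ)) ^ 2))
          ≤ (1 + 1 / (m u) ^ 2) * Psi (m u) * (1 + Q / c u) :=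
            mul_le_mul_of_nonneg_left hstep2 h2
        _ = (1 + 1 / (m u) ^ 2) * (1 + Q / c u) * Psi (m u) := by ring
    rw [div_le_iff₀ hd0]
    refine hSP.trans (le_of_eq ?_)
    have : U u = (1 + 1 / (m u) ^ 2) * (c u / Q + 1) := by simp only [hUdef]
    rw [this]
    exact halg2 (1 / (m u) ^ 2) (c u) hc0.ne'
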